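/- For all integers k, l, m, n: (1) D_4(2k+1, 2l, 2m, 2n) ≡ 8m+1 (mod 16); (2) D_4(2k, 2l+1, 2m+1, 2n+1) ≡ 8(k+l+n) − 3 (mod 16). -/

import Mathlib

open Matrix Complex

def D4 (x0 x1 x2 x3 : ℤ) : ℤ :=
  (Matrix.of ![![x0, x1, x2, x3], ![x3, x0, x1, x2], ![x2, x3, x0, x1], ![x1, x2, x3, x0]]).det

lemma D4_eq (x0 x1 x2 x3 : ℤ) :
    D4 x0 x1 x2 x3 = x0^4 - x1^4 + x2^4 - x3^4
      - 2*x0^2*x2^2 + 2*x1^2*x3^2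
      - 4*x0^2*x1*x3 - 4*x1*x2^2*x3 + 4*x0*x1^2*x2 + 4*x0*x2*x3^2 := by
  unfold D4
  simp [Matrix.det_succ_row_zero, Fin.sum_univ_succ, Fin.succAbove,
    Fin.castSucc, Fin.castAdd, Fin.castLE]
  ring

theorem stmt6 (k l m n : ℤ) :
    D4 (2 * k + 1) (2 * l) (2 * m) (2 * n) ≡ 8 * m + 1 [ZMOD 16] ∧
    D4 (2 * k) (2 * l + 1) (2 * m + 1) (2 * n + 1) ≡ 8 * (k + l + n) - 3 [ZMOD 16] := by
  obtain ⟨a, ha⟩ := Int.even_mul_succ_self k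
  obtain ⟨b, hb⟩ := Int.even_mul_succ_self m
  constructor <;> rw [D4_eq, Int.ModEq]
  · refine Int.emod_emod_of_dvd _ dvd_rfl ▸ ?_
    have h : (8 * m + 1) -
        ((2*k+1)^4 - (2*l)^4 + (2*m)^4 - (2*n)^4
        - 2*(2*k+1)^2*(2*m)^2 + 2*(2*l)^2*(2*n)^2
        - 4*(2*k+1)^2*(2*l)*(2*n) - 4*(2*l)*(2*m)^2*(2*n)
        + 4*(2*k+1)*(2*l)^2*(2*m) + 4*(2*k+1)*(2*m)*(2*n)^2) =
      16 * (n*n*n*n - 2*m*n*n - m*m*m*m + l*n + 4*l*m*m*n - 2*l*l*n*n - 2*l*l*m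
        + l*l*l*l - 4*k*m*n*n + 2*k*m*m + 4*k*l*n - 4*k*l*l*m - k*k + 2*k*k*m*m
        + 4*k*k*l*n - 2*k*k*k - k*k*k*k - a + b) := by
      linear_combination (-8 : ℤ) * ha + 8 * hb
    omega
  · have h : (8 * (k + l + n) - 3) -
        ((2*k)^4 - (2*l+1)^4 + (2*m+1)^4 - (2*n+1)^4
        - 2*(2*k)^2*(2*m+1)^2 + 2*(2*l+1)^2*(2*n+1)^2
        - 4*(2*k)^2*(2*l+1)*(2*n+1) - 4*(2*l+1)*(2*m+1)^2*(2*n+1)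
        + 4*(2*k)*(2*l+1)^2*(2*m+1) + 4*(2*k)*(2*m+1)*(2*n+1)^2) =
      16 * (n + n*n + 2*n*n*n + n*n*n*n + 2*m*n - m*m + 2*m*m*n - 2*m*m*m - m*m*m*m
        + l - l*n - 2*l*n*n + 2*l*m + 4*l*m*n + 2*l*m*m + 4*l*m*m*n + l*l - 2*l*l*n
        - 2*l*l*n*n + 2*l*l*l + l*l*l*l - k - 2*k*n - 2*k*n*n - 2*k*m - 4*k*m*n
        - 4*k*m*n*n - 2*k*l - 4*k*l*m - 2*k*l*l - 4*k*l*l*m + k*k + 2*k*k*n + 2*k*k*m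
        + 2*k*k*m*m + 2*k*k*l + 4*k*k*l*n - k*k*k*k + a + b) := by
      linear_combination (8 : ℤ) * ha + 8 * hb
    omega
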